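/- For the Spin(7) 4-form Θ on ℝ⁸: Θ_{ijkl} Θ_{abcd} δ^{kc} δ^{ld} = 6 δ_{ia} δ_{jb} - 6 δ_{ib} δ_{ja} - 4 Θ_{ijab} for all i,j,a,b ∈ {1,...,8}. -/

import Mathlib

open scoped BigOperators

noncomputable def kd {n : ℕ} (i j : Fin n) : ℝ := if i = j then 1 else 0

noncomputable def w3 {n : ℕ} (a b c i j k : Fin n) : ℝ :=
  Matrix.det !![kd a i, kd a j, kd a k; kd b i, kd b j, kd b k; kd c i, kd c j, kd c k]

noncomputable def w4 {n : ℕ} (a b c d i j k l : Fin n) : ℝ :=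
  Matrix.det !![kd a i, kd a j, kd a k, kd a l; kd b i, kd b j, kd b k, kd b l;
                kd c i, kd c j, kd c k, kd c l; kd d i, kd d j, kd d k, kd d l]

/-- Components of the standard G₂ 3-form Π on ℝ⁷ (0-indexed coordinates). -/
noncomputable def Pi7 (i j k : Fin 7) : ℝ :=
  w3 0 1 4 i j k + w3 0 2 5 i j k + w3 0 3 6 i j k - w3 1 2 6 i j k
    + w3 1 3 5 i j k - w3 2 3 4 i j k + w3 4 5 6 i j k

/-- Components of the standard G₂ 4-form Ψ = *Π on ℝ⁷. -/
noncomputable def Psi7 (i j k l : Fin 7) : ℝ :=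
  w4 0 1 2 3 i j k l - w4 0 1 5 6 i j k l + w4 0 2 4 6 i j k l - w4 0 3 4 5 i j k l
    + w4 1 2 4 5 i j k l + w4 1 3 4 6 i j k l + w4 2 3 5 6 i j k l

/-- Components of the Spin(7) 4-form Θ = Π ∧ dx⁸ + Ψ on ℝ⁸ (0-indexed). -/
noncomputable def Theta8 (i j k l : Fin 8) : ℝ :=
  (w4 0 1 4 7 i j k l + w4 0 2 5 7 i j k l + w4 0 3 6 7 i j k l - w4 1 2 6 7 i j k l
    + w4 1 3 5 7 i j k l - w4 2 3 4 7 i j k l + w4 4 5 6 7 i j k l)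
  + (w4 0 1 2 3 i j k l - w4 0 1 5 6 i j k l + w4 0 2 4 6 i j k l - w4 0 3 4 5 i j k l
    + w4 1 2 4 5 i j k l + w4 1 3 4 6 i j k l + w4 2 3 5 6 i j k l)


def kdZ {n : ℕ} (i j : Fin n) : ℤ := if i = j then 1 else 0

def w4Z {n : ℕ} (a b c d i j k l : Fin n) : ℤ :=
  Matrix.det !![kdZ a i, kdZ a j, kdZ a k, kdZ a l; kdZ b i, kdZ b j, kdZ b k, kdZ b l;
                kdZ c i, kdZ c j, kdZ c k, kdZ c l; kdZ d i, kdZ d j, kdZ d k, kdZ d l]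

def w4E {n : ℕ} (a b c d i j k l : Fin n) : ℤ :=
  0 + kdZ a i * kdZ b j * kdZ c k * kdZ d l
    - kdZ a i * kdZ b j * kdZ c l * kdZ d k
    - kdZ a i * kdZ b k * kdZ c j * kdZ d l
    + kdZ a i * kdZ b k * kdZ c l * kdZ d j
    + kdZ a i * kdZ b l * kdZ c j * kdZ d k
    - kdZ a i * kdZ b l * kdZ c k * kdZ d j
    - kdZ a j * kdZ b i * kdZ c k * kdZ d l
    + kdZ a j * kdZ b i * kdZ c l * kdZ d k
    + kdZ a j * kdZ b k * kdZ c i * kdZ d l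
    - kdZ a j * kdZ b k * kdZ c l * kdZ d i
    - kdZ a j * kdZ b l * kdZ c i * kdZ d k
    + kdZ a j * kdZ b l * kdZ c k * kdZ d i
    + kdZ a k * kdZ b i * kdZ c j * kdZ d l
    - kdZ a k * kdZ b i * kdZ c l * kdZ d j
    - kdZ a k * kdZ b j * kdZ c i * kdZ d l
    + kdZ a k * kdZ b j * kdZ c l * kdZ d i
    + kdZ a k * kdZ b l * kdZ c i * kdZ d j
    - kdZ a k * kdZ b l * kdZ c j * kdZ d i
    - kdZ a l * kdZ b i * kdZ c j * kdZ d k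
    + kdZ a l * kdZ b i * kdZ c k * kdZ d j
    + kdZ a l * kdZ b j * kdZ c i * kdZ d k
    - kdZ a l * kdZ b j * kdZ c k * kdZ d i
    - kdZ a l * kdZ b k * kdZ c i * kdZ d j
    + kdZ a l * kdZ b k * kdZ c j * kdZ d i


lemma w4Z_eq {n : ℕ} (a b c d i j k l : Fin n) :
    w4Z a b c d i j k l = w4E a b c d i j k l := by
  simp [w4Z, w4E, Matrix.det_succ_row_zero, Fin.sum_univ_succ, Fin.succAbove,
    Matrix.cons_val_succ, Fin.castSucc, Fin.castAdd, Fin.castLE]; ring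

lemma kd_eq {n : ℕ} (i j : Fin n) : kd i j = ((kdZ i j : ℤ) : ℝ) := by
  simp [kd, kdZ, apply_ite (Int.cast : ℤ → ℝ)]

lemma w4_cast {n : ℕ} (a b c d i j k l : Fin n) :
    w4 a b c d i j k l = ((w4E a b c d i j k l : ℤ) : ℝ) := by
  rw [← w4Z_eq, w4, w4Z,
    show ((Matrix.det _ : ℤ) : ℝ) = _ from RingHom.map_det (Int.castRingHom ℝ) _]
  congr 1
  ext x y
  fin_cases x <;> fin_cases y <;> simp [kd_eq]

def ThetaE (i j k l : Fin 8) : ℤ :=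
  (w4E 0 1 4 7 i j k l + w4E 0 2 5 7 i j k l + w4E 0 3 6 7 i j k l - w4E 1 2 6 7 i j k l
    + w4E 1 3 5 7 i j k l - w4E 2 3 4 7 i j k l + w4E 4 5 6 7 i j k l)
  + (w4E 0 1 2 3 i j k l - w4E 0 1 5 6 i j k l + w4E 0 2 4 6 i j k l - w4E 0 3 4 5 i j k l
    + w4E 1 2 4 5 i j k l + w4E 1 3 4 6 i j k l + w4E 2 3 5 6 i j k l)

def Ntable : ℕ := 9719173525787965296513318638732163561635102131547914897309233988210872697931126023793632872450356259786054025699054091133475661611300933356259347734667013041697717429204754566410094278931967155248386658888223217931531831472953098597390372776967798559477233077645969972157727634335488926268837880020467789070136411110494736528191206658969993078077835710435968601632266195320806760130177645161910992122871771747498117757112720452842030531842852842728247138151663429931247861392885771750457415365690054357693759308769813280331277818300068405664253339849535810147941973622328796513875273771188564211318477865223100511940528585003689327229621068482914874505399457922155242251651740447390130255967595378620785040923376121364376813578153899194478699682494101135452615314082238910585137509238405570877362156990739540383474714077675592638624776173849298843460347481841128749385271506471600977268613989123560627706362694817008111828339456369708574120356019203463003292280665609520819917753276443499876017918303106940822787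026365365207400176438414915137757224000395519543312364630394772143420763100435011341407820033309412074517662337796490404329518478530434957361394087192609705294026267697873701851042345508479935285521575192083475732223120133728664691382041151556951554523799590252144876532772214792554518931386041710783191839496125949074275918937530207352278574330676398756819883721562683335967099893754320264960749719471621994899186307125144593040443607236958502539388678485372421650115753437727414632106750082938320677978258231319216907685404816743726179098573145610323837401139788123543840274215039656500914222871936024732995552640355045745826762183706571807392890571727947363735920716430460898444809988582630309558655809826462715345025042167907696045787529288511473201037154989653357261094642140031637691239689812747137139418390834937609633786668435854627319305982562403828003293555080543539267420998049876894428194339954955340659143507154381180425835356160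

def TZ (i j k l : Fin 8) : ℤ :=
  ((Ntable / 3 ^ (((i.val * 8 + j.val) * 8 + k.val) * 8 + l.val)) % 3 : ℕ) - 1

set_option maxRecDepth 100000 in
set_option exponentiation.threshold 5000 in
set_option maxHeartbeats 4000000 in
lemma tbl0 : ∀ j k l : Fin 8, ThetaE 0 j k l = TZ 0 j k l := by decide +kernel

set_option maxRecDepth 100000 in
set_option exponentiation.threshold 5000 in
set_option maxHeartbeats 4000000 in
lemma tbl1 : ∀ j k l : Fin 8, ThetaE 1 j k l = TZ 1 j k l := by decide +kernel

set_option maxRecDepth 100000 in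
set_option exponentiation.threshold 5000 in
set_option maxHeartbeats 4000000 in
lemma tbl2 : ∀ j k l : Fin 8, ThetaE 2 j k l = TZ 2 j k l := by decide +kernel

set_option maxRecDepth 100000 in
set_option exponentiation.threshold 5000 in
set_option maxHeartbeats 4000000 in
lemma tbl3 : ∀ j k l : Fin 8, ThetaE 3 j k l = TZ 3 j k l := by decide +kernel

set_option maxRecDepth 100000 in
set_option exponentiation.threshold 5000 in
set_option maxHeartbeats 4000000 in
lemma tbl4 : ∀ j k l : Fin 8, ThetaE 4 j k l = TZ 4 j k l := by decide +kernel

set_option maxRecDepth 100000 in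
set_option exponentiation.threshold 5000 in
set_option maxHeartbeats 4000000 in
lemma tbl5 : ∀ j k l : Fin 8, ThetaE 5 j k l = TZ 5 j k l := by decide +kernel

set_option maxRecDepth 100000 in
set_option exponentiation.threshold 5000 in
set_option maxHeartbeats 4000000 in
lemma tbl6 : ∀ j k l : Fin 8, ThetaE 6 j k l = TZ 6 j k l := by decide +kernel

set_option maxRecDepth 100000 in
set_option exponentiation.threshold 5000 in
set_option maxHeartbeats 4000000 in
lemma tbl7 : ∀ j k l : Fin 8, ThetaE 7 j k l = TZ 7 j k l := by decide +kernel

lemma tbl (i j k l : Fin 8) : ThetaE i j k l = TZ i j k l := by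
  fin_cases i
  exacts [tbl0 j k l, tbl1 j k l, tbl2 j k l, tbl3 j k l, tbl4 j k l, tbl5 j k l, tbl6 j k l, tbl7 j k l]

set_option maxRecDepth 100000 in
set_option exponentiation.threshold 5000 in
set_option maxHeartbeats 4000000 in
lemma key0 : ∀ j a b : Fin 8, (∑ k : Fin 8, ∑ l : Fin 8, TZ 0 j k l * TZ a b k l)
    = 6 * kdZ 0 a * kdZ j b - 6 * kdZ 0 b * kdZ j a - 4 * TZ 0 j a b := by decide +kernel

set_option maxRecDepth 100000 in
set_option exponentiation.threshold 5000 in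
set_option maxHeartbeats 4000000 in
lemma key1 : ∀ j a b : Fin 8, (∑ k : Fin 8, ∑ l : Fin 8, TZ 1 j k l * TZ a b k l)
    = 6 * kdZ 1 a * kdZ j b - 6 * kdZ 1 b * kdZ j a - 4 * TZ 1 j a b := by decide +kernel

set_option maxRecDepth 100000 in
set_option exponentiation.threshold 5000 in
set_option maxHeartbeats 4000000 in
lemma key2 : ∀ j a b : Fin 8, (∑ k : Fin 8, ∑ l : Fin 8, TZ 2 j k l * TZ a b k l)
    = 6 * kdZ 2 a * kdZ j b - 6 * kdZ 2 b * kdZ j a - 4 * TZ 2 j a b := by decide +kernel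

set_option maxRecDepth 100000 in
set_option exponentiation.threshold 5000 in
set_option maxHeartbeats 4000000 in
lemma key3 : ∀ j a b : Fin 8, (∑ k : Fin 8, ∑ l : Fin 8, TZ 3 j k l * TZ a b k l)
    = 6 * kdZ 3 a * kdZ j b - 6 * kdZ 3 b * kdZ j a - 4 * TZ 3 j a b := by decide +kernel

set_option maxRecDepth 100000 in
set_option exponentiation.threshold 5000 in
set_option maxHeartbeats 4000000 in
lemma key4 : ∀ j a b : Fin 8, (∑ k : Fin 8, ∑ l : Fin 8, TZ 4 j k l * TZ a b k l)
    = 6 * kdZ 4 a * kdZ j b - 6 * kdZ 4 b * kdZ j a - 4 * TZ 4 j a b := by decide +kernel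

set_option maxRecDepth 100000 in
set_option exponentiation.threshold 5000 in
set_option maxHeartbeats 4000000 in
lemma key5 : ∀ j a b : Fin 8, (∑ k : Fin 8, ∑ l : Fin 8, TZ 5 j k l * TZ a b k l)
    = 6 * kdZ 5 a * kdZ j b - 6 * kdZ 5 b * kdZ j a - 4 * TZ 5 j a b := by decide +kernel

set_option maxRecDepth 100000 in
set_option exponentiation.threshold 5000 in
set_option maxHeartbeats 4000000 in
lemma key6 : ∀ j a b : Fin 8, (∑ k : Fin 8, ∑ l : Fin 8, TZ 6 j k l * TZ a b k l)
    = 6 * kdZ 6 a * kdZ j b - 6 * kdZ 6 b * kdZ j a - 4 * TZ 6 j a b := by decide +kernel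

set_option maxRecDepth 100000 in
set_option exponentiation.threshold 5000 in
set_option maxHeartbeats 4000000 in
lemma key7 : ∀ j a b : Fin 8, (∑ k : Fin 8, ∑ l : Fin 8, TZ 7 j k l * TZ a b k l)
    = 6 * kdZ 7 a * kdZ j b - 6 * kdZ 7 b * kdZ j a - 4 * TZ 7 j a b := by decide +kernel

lemma key (i j a b : Fin 8) : (∑ k : Fin 8, ∑ l : Fin 8, TZ i j k l * TZ a b k l)
    = 6 * kdZ i a * kdZ j b - 6 * kdZ i b * kdZ j a - 4 * TZ i j a b := by
  fin_cases i
  exacts [key0 j a b, key1 j a b, key2 j a b, key3 j a b, key4 j a b, key5 j a b, key6 j a b, key7 j a b]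

lemma Theta8_cast (i j k l : Fin 8) : Theta8 i j k l = ((TZ i j k l : ℤ) : ℝ) := by
  rw [← tbl]
  simp only [Theta8, ThetaE, w4_cast]
  push_cast
  ring


theorem stmt15 (i j a b : Fin 8) :
    ∑ k : Fin 8, ∑ l : Fin 8, ∑ c : Fin 8, ∑ d : Fin 8,
      Theta8 i j k l * Theta8 a b c d * kd k c * kd l d
        = 6 * kd i a * kd j b - 6 * kd i b * kd j a - 4 * Theta8 i j a b := by
  have hs : (∑ k : Fin 8, ∑ l : Fin 8, ∑ c : Fin 8, ∑ d : Fin 8,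
      Theta8 i j k l * Theta8 a b c d * kd k c * kd l d)
      = ∑ k : Fin 8, ∑ l : Fin 8, Theta8 i j k l * Theta8 a b k l := by
    refine Finset.sum_congr rfl fun k _ => Finset.sum_congr rfl fun l _ => ?_
    simp [kd, mul_ite, ite_mul, mul_one, mul_zero, Finset.sum_ite_eq, Finset.sum_ite_eq']
  rw [hs]
  have h := key i j a b
  simp only [Theta8_cast, kd_eq]
  calc (∑ k : Fin 8, ∑ l : Fin 8, ((TZ i j k l : ℤ) : ℝ) * ((TZ a b k l : ℤ) : ℝ))
      = ((∑ k : Fin 8, ∑ l : Fin 8, TZ i j k l * TZ a b k l : ℤ) : ℝ) := by push_cast; rfl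
    _ = _ := by rw [h]; push_cast; ring
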